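/- Transfer of the closing property to conics through the same secant points: Let R, S ∈ ℝ³ be linearly independent with ⟨R,R⟩ = 0 and ⟨S,S⟩ = 0, and let W = span{R,S} (the line ℓ meets the conic C in the points R and S). Let P₁,…,P_{2n} ∈ W with ⟨Pᵢ,Pᵢ⟩ ≠ 0 have the closing property with respect to the Minkowski form. Let B be any nondegenerate symmetric bilinear form on ℝ³ with B(R,R) = 0 and B(S,S) = 0 (a conic D through R and S) such that B(Pᵢ,Pᵢ) ≠ 0 for all i. Then P₁,…,P_{2n} have the closing property with respect to B. -/

import Mathlib

/-- Minkowski product on ℝ³. -/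
def mink (X Y : Fin 3 → ℝ) : ℝ := X 0 * Y 0 + X 1 * Y 1 - X 2 * Y 2

/-- The reversion map with respect to the (bilinear) form `B` in the point `P`
(with `B P P ≠ 0`): `M_P^B X = B(P,P)X − 2B(X,P)P`. -/
def revB (B : (Fin 3 → ℝ) → (Fin 3 → ℝ) → ℝ) (P X : Fin 3 → ℝ) : Fin 3 → ℝ :=
  B P P • X - (2 * B X P) • P

/-- `chainB B n P X = (M_{P n}^B ∘ ⋯ ∘ M_{P 1}^B) X`, the composition of the reversions
with respect to `B` in `P 0, …, P (n-1)`, applied in this order. -/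
def chainB (B : (Fin 3 → ℝ) → (Fin 3 → ℝ) → ℝ) :
    (n : ℕ) → (Fin n → (Fin 3 → ℝ)) → (Fin 3 → ℝ) → (Fin 3 → ℝ)
  | 0, _, X => X
  | n + 1, P, X => revB B (P (Fin.last n)) (chainB B n (fun i => P i.castSucc) X)

/-- The points `P 0, …, P (n-1)` have the closing property with respect to the form `B`
iff `M_{P n}^B ∘ ⋯ ∘ M_{P 1}^B` is a nonzero scalar multiple of the identity. For
`B = mink` this is the closing property with respect to the conic `C`. -/
def closesB (B : (Fin 3 → ℝ) → (Fin 3 → ℝ) → ℝ) (n : ℕ) (P : Fin n → (Fin 3 → ℝ)) :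
    Prop :=
  ∃ c : ℝ, c ≠ 0 ∧ ∀ X, chainB B n P X = c • X

section helpers

variable {F : (Fin 3 → ℝ) → (Fin 3 → ℝ) → ℝ}

lemma minkLin : ∀ (c : ℝ) (x x' y : Fin 3 → ℝ), mink (c • x + x') y = c * mink x y + mink x' y := by
  intros; simp [mink]; ring

lemma minkSymm : ∀ x y : Fin 3 → ℝ, mink x y = mink y x := by
  intros; simp [mink]; ring

lemma Fzero (hlin : ∀ (c : ℝ) (x x' y : Fin 3 → ℝ), F (c • x + x') y = c * F x y + F x' y)
    (y : Fin 3 → ℝ) : F 0 y = 0 := by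
  have h := hlin 1 0 0 y
  simp at h
  linarith

lemma Fsmul (hlin : ∀ (c : ℝ) (x x' y : Fin 3 → ℝ), F (c • x + x') y = c * F x y + F x' y)
    (c : ℝ) (x y : Fin 3 → ℝ) : F (c • x) y = c * F x y := by
  have h := hlin c x 0 y
  simpa [Fzero hlin] using h

lemma Fcombo_left (hlin : ∀ (c : ℝ) (x x' y : Fin 3 → ℝ), F (c • x + x') y = c * F x y + F x' y)
    (u v : ℝ) (x y z : Fin 3 → ℝ) : F (u • x + v • y) z = u * F x z + v * F y z := by
  rw [hlin u x (v • y) z, Fsmul hlin]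

lemma Fcombo_right (hlin : ∀ (c : ℝ) (x x' y : Fin 3 → ℝ), F (c • x + x') y = c * F x y + F x' y)
    (hsymm : ∀ x y, F x y = F y x)
    (u v : ℝ) (x y z : Fin 3 → ℝ) : F z (u • x + v • y) = u * F z x + v * F z y := by
  rw [hsymm z _, Fcombo_left hlin, hsymm x z, hsymm y z]

lemma rev_lin (hlin : ∀ (c : ℝ) (x x' y : Fin 3 → ℝ), F (c • x + x') y = c * F x y + F x' y)
    (P : Fin 3 → ℝ) (u : ℝ) (X Y : Fin 3 → ℝ) :
    revB F P (u • X + Y) = u • revB F P X + revB F P Y := by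
  simp only [revB, hlin u X Y P]
  module

lemma chain_lin (hlin : ∀ (c : ℝ) (x x' y : Fin 3 → ℝ), F (c • x + x') y = c * F x y + F x' y) :
    ∀ (k : ℕ) (Q : Fin k → (Fin 3 → ℝ)) (u : ℝ) (X Y : Fin 3 → ℝ),
      chainB F k Q (u • X + Y) = u • chainB F k Q X + chainB F k Q Y
  | 0, Q, u, X, Y => rfl
  | k + 1, Q, u, X, Y => by
    show revB F _ _ = _
    rw [chain_lin hlin k _ u X Y, rev_lin hlin]
    rfl

lemma chain_zero (hlin : ∀ (c : ℝ) (x x' y : Fin 3 → ℝ), F (c • x + x') y = c * F x y + F x' y)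
    (k : ℕ) (Q : Fin k → (Fin 3 → ℝ)) : chainB F k Q 0 = 0 := by
  have h := chain_lin hlin k Q 1 0 0
  simp at h
  exact h

lemma chain_smul (hlin : ∀ (c : ℝ) (x x' y : Fin 3 → ℝ), F (c • x + x') y = c * F x y + F x' y)
    (k : ℕ) (Q : Fin k → (Fin 3 → ℝ)) (u : ℝ) (X : Fin 3 → ℝ) :
    chainB F k Q (u • X) = u • chainB F k Q X := by
  have h := chain_lin hlin k Q u X 0
  simpa [chain_zero hlin] using h

lemma Fquad (hlin : ∀ (c : ℝ) (x x' y : Fin 3 → ℝ), F (c • x + x') y = c * F x y + F x' y)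
    (hsymm : ∀ x y, F x y = F y x) {R S : Fin 3 → ℝ} (hR : F R R = 0) (hS : F S S = 0)
    (a g : ℝ) : F (a • R + g • S) (a • R + g • S) = 2 * a * g * F R S := by
  rw [Fcombo_left hlin, Fcombo_right hlin hsymm, Fcombo_right hlin hsymm, hR, hS, hsymm S R]
  ring

lemma rev_W (hlin : ∀ (c : ℝ) (x x' y : Fin 3 → ℝ), F (c • x + x') y = c * F x y + F x' y)
    (hsymm : ∀ x y, F x y = F y x) {R S : Fin 3 → ℝ} (hR : F R R = 0) (hS : F S S = 0)
    (a g u v : ℝ) :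
    revB F (a • R + g • S) (u • R + v • S)
      = (-(2 * F R S * a ^ 2 * v)) • R + (-(2 * F R S * g ^ 2 * u)) • S := by
  have h1 := Fquad hlin hsymm hR hS a g
  have h2 : F (u • R + v • S) (a • R + g • S) = u * g * F R S + v * a * F R S := by
    rw [Fcombo_left hlin, Fcombo_right hlin hsymm, Fcombo_right hlin hsymm, hR, hS, hsymm S R]
    ring
  rw [revB, h1, h2]
  module

lemma chain_W {Bf : (Fin 3 → ℝ) → (Fin 3 → ℝ) → ℝ}
    (hBlin : ∀ (c : ℝ) (x x' y : Fin 3 → ℝ), Bf (c • x + x') y = c * Bf x y + Bf x' y)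
    (hBsymm : ∀ x y, Bf x y = Bf y x) {R S : Fin 3 → ℝ}
    (hBR : Bf R R = 0) (hBS : Bf S S = 0) (hRC : mink R R = 0) (hSC : mink S S = 0)
    (hm : mink R S ≠ 0) :
    ∀ (k : ℕ) (Q : Fin k → (Fin 3 → ℝ)) (a g : Fin k → ℝ),
      (∀ j, Q j = a j • R + g j • S) → ∀ u v : ℝ,
      ∃ u' v' : ℝ, chainB mink k Q (u • R + v • S) = u' • R + v' • S ∧
        chainB Bf k Q (u • R + v • S)
          = ((Bf R S / mink R S) ^ k * u') • R + ((Bf R S / mink R S) ^ k * v') • S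
  | 0, Q, a, g, hQ, u, v => ⟨u, v, rfl, by simp [chainB]⟩
  | k + 1, Q, a, g, hQ, u, v => by
    obtain ⟨u', v', h1, h2⟩ := chain_W hBlin hBsymm hBR hBS hRC hSC hm k
      (fun i => Q i.castSucc) (fun i => a i.castSucc) (fun i => g i.castSucc)
      (fun j => hQ j.castSucc) u v
    refine ⟨-(2 * mink R S * (a (Fin.last k)) ^ 2 * v'),
            -(2 * mink R S * (g (Fin.last k)) ^ 2 * u'), ?_, ?_⟩
    · show revB mink (Q (Fin.last k)) _ = _
      rw [h1, hQ (Fin.last k), rev_W minkLin minkSymm hRC hSC]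
    · show revB Bf (Q (Fin.last k)) _ = _
      rw [h2, hQ (Fin.last k), rev_W hBlin hBsymm hBR hBS]
      match_scalars <;> field_simp <;> ring_nf <;> simp [hm]

lemma chain_orth (hlin : ∀ (c : ℝ) (x x' y : Fin 3 → ℝ), F (c • x + x') y = c * F x y + F x' y)
    (hsymm : ∀ x y, F x y = F y x) {R S : Fin 3 → ℝ} :
    ∀ (k : ℕ) (Q : Fin k → (Fin 3 → ℝ)),
      (∀ j, ∃ a g : ℝ, Q j = a • R + g • S) →
      ∀ Z, F Z R = 0 → F Z S = 0 →
      chainB F k Q Z = (∏ j, F (Q j) (Q j)) • Z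
  | 0, Q, hQ, Z, h1, h2 => by simp [chainB]
  | k + 1, Q, hQ, Z, h1, h2 => by
    have ih := chain_orth hlin hsymm k (fun i => Q i.castSucc) (fun j => hQ j.castSucc) Z h1 h2
    show revB F (Q (Fin.last k)) _ = _
    rw [ih, revB]
    obtain ⟨a, g, hq⟩ := hQ (Fin.last k)
    have hZQ : F Z (Q (Fin.last k)) = 0 := by
      rw [hq, Fcombo_right hlin hsymm, h1, h2]; ring
    have hsZ : F ((∏ j : Fin k, F (Q j.castSucc) (Q j.castSucc)) • Z) (Q (Fin.last k)) = 0 := by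
      rw [Fsmul hlin, hZQ, mul_zero]
    rw [hsZ, Fin.prod_univ_castSucc]
    module

end helpers

/-- **Transfer of the closing property to conics through the same secant points.**
If `P 0, …, P (2n-1)` on the line spanned by `R, S ∈ C` have the closing property with
respect to the Minkowski form, then they have the closing property with respect to any
nondegenerate symmetric bilinear form `B` vanishing on `R` and `S` (i.e. with respect to
any conic through `R` and `S`) for which the `P i` are off the corresponding conic. -/
theorem closing_transfer_secant
    (R S : Fin 3 → ℝ) (hRS : LinearIndependent ℝ ![R, S])
    (hRC : mink R R = 0) (hSC : mink S S = 0)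
    (n : ℕ) (P : Fin (2 * n) → (Fin 3 → ℝ))
    (hPW : ∀ i, P i ∈ Submodule.span ℝ {R, S})
    (hPC : ∀ i, mink (P i) (P i) ≠ 0)
    (hclose : closesB mink (2 * n) P)
    (B : (Fin 3 → ℝ) → (Fin 3 → ℝ) → ℝ)
    (hBlin : ∀ (c : ℝ) (x x' y : Fin 3 → ℝ), B (c • x + x') y = c * B x y + B x' y)
    (hBsymm : ∀ x y, B x y = B y x)
    (hBnd : ∀ x, (∀ y, B x y = 0) → x = 0)
    (hBR : B R R = 0) (hBS : B S S = 0)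
    (hBP : ∀ i, B (P i) (P i) ≠ 0) :
    closesB B (2 * n) P := by
  obtain ⟨c, hc0, hc⟩ := hclose
  rcases Nat.eq_zero_or_pos n with rfl | hn
  · exact ⟨1, one_ne_zero, fun X => (one_smul ℝ X).symm⟩
  choose a g hag using fun i => Submodule.mem_span_pair.mp (hPW i)
  have hquadm : ∀ i, mink (P i) (P i) = 2 * a i * g i * mink R S := fun i => by
    rw [← hag i]; exact Fquad minkLin minkSymm hRC hSC _ _
  have hquadB : ∀ i, B (P i) (P i) = 2 * a i * g i * B R S := fun i => by
    rw [← hag i]; exact Fquad hBlin hBsymm hBR hBS _ _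
  have i0 : Fin (2 * n) := ⟨0, by omega⟩
  have hm : mink R S ≠ 0 := by
    intro h; apply hPC i0; rw [hquadm i0, h, mul_zero]
  have hβ : B R S ≠ 0 := by
    intro h; apply hBP i0; rw [hquadB i0, h, mul_zero]
  have hr : B R S / mink R S ≠ 0 := div_ne_zero hβ hm
  have huniq : ∀ u v u' v' : ℝ, u • R + v • S = u' • R + v' • S → u = u' ∧ v = v' := by
    intro u v u' v' h
    have h0 : (u - u') • R + (v - v') • S = 0 := by
      have he : (u - u') • R + (v - v') • S = (u • R + v • S) - (u' • R + v' • S) := by module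
      rw [he, h, sub_self]
    obtain ⟨h1, h2⟩ := LinearIndependent.pair_iff.mp hRS _ _ h0
    exact ⟨by linarith, by linarith⟩
  have hQcoords : ∀ j, P j = a j • R + g j • S := fun j => (hag j).symm
  have hRid : (1:ℝ) • R + (0:ℝ) • S = R := by module
  have hSid : (0:ℝ) • R + (1:ℝ) • S = S := by module
  obtain ⟨uR, vR, hmR, hBRc⟩ :=
    chain_W hBlin hBsymm hBR hBS hRC hSC hm (2*n) P a g hQcoords 1 0
  obtain ⟨uS, vS, hmS, hBSc⟩ :=
    chain_W hBlin hBsymm hBR hBS hRC hSC hm (2*n) P a g hQcoords 0 1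
  rw [hRid] at hmR hBRc
  rw [hSid] at hmS hBSc
  have eR : uR • R + vR • S = c • R + (0:ℝ) • S := by
    rw [← hmR, hc R]; module
  have eS : uS • R + vS • S = (0:ℝ) • R + c • S := by
    rw [← hmS, hc S]; module
  obtain ⟨huR, hvR⟩ := huniq _ _ _ _ eR
  obtain ⟨huS, hvS⟩ := huniq _ _ _ _ eS
  rw [huR, hvR] at hBRc
  rw [huS, hvS] at hBSc
  have hchainBR : chainB B (2*n) P R = ((B R S / mink R S) ^ (2*n) * c) • R := by
    rw [hBRc]; module
  have hchainBS : chainB B (2*n) P S = ((B R S / mink R S) ^ (2*n) * c) • S := by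
    rw [hBSc]; module
  -- the Minkowski-orthogonal vector
  set Z' : Fin 3 → ℝ :=
    ![R 1 * S 2 - R 2 * S 1, R 2 * S 0 - R 0 * S 2, R 1 * S 0 - R 0 * S 1] with hZ'def
  have hZ'R : mink Z' R = 0 := by
    simp only [hZ'def, mink, Matrix.cons_val_zero, Matrix.cons_val_one, Matrix.head_cons,
      Matrix.cons_val_two, Matrix.tail_cons]
    ring
  have hZ'S : mink Z' S = 0 := by
    simp only [hZ'def, mink, Matrix.cons_val_zero, Matrix.cons_val_one, Matrix.head_cons,
      Matrix.cons_val_two, Matrix.tail_cons]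
    ring
  have hZ'0 : Z' ≠ 0 := by
    intro h
    apply crossProduct_ne_zero_iff_linearIndependent.mpr hRS
    have h0 := congrFun h 0
    have h1 := congrFun h 1
    have h2 := congrFun h 2
    simp only [hZ'def, Matrix.cons_val_zero, Matrix.cons_val_one, Matrix.head_cons,
      Matrix.cons_val_two, Matrix.tail_cons, Pi.zero_apply] at h0 h1 h2
    rw [cross_apply]
    have h2' : R 0 * S 1 - R 1 * S 0 = 0 := by linarith
    rw [h0, h1, h2']
    funext j
    fin_cases j <;> rfl
  have hprodm : (∏ j, mink (P j) (P j)) = c := by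
    have horth := chain_orth minkLin minkSymm (2*n) P
      (fun j => ⟨a j, g j, (hag j).symm⟩) Z' hZ'R hZ'S
    rw [hc Z'] at horth
    obtain ⟨j, hj⟩ := Function.ne_iff.mp hZ'0
    have hjj := congrFun horth j
    simp only [Pi.smul_apply, smul_eq_mul] at hjj
    have hj' : Z' j ≠ 0 := by simpa using hj
    exact (mul_right_cancel₀ hj' hjj).symm
  have hprodB : (∏ j, B (P j) (P j)) = (B R S / mink R S) ^ (2*n) * c := by
    have hrel : ∀ j, B (P j) (P j) = (B R S / mink R S) * mink (P j) (P j) := fun j => by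
      rw [hquadB j, hquadm j]; field_simp
    calc (∏ j, B (P j) (P j)) = ∏ j, (B R S / mink R S) * mink (P j) (P j) :=
          Finset.prod_congr rfl (fun j _ => hrel j)
      _ = (B R S / mink R S) ^ (2*n) * ∏ j, mink (P j) (P j) := by
          rw [Finset.prod_mul_distrib, Finset.prod_const, Finset.card_univ, Fintype.card_fin]
      _ = (B R S / mink R S) ^ (2*n) * c := by rw [hprodm]
  refine ⟨(B R S / mink R S) ^ (2*n) * c, mul_ne_zero (pow_ne_zero _ hr) hc0, fun X => ?_⟩
  set w : Fin 3 → ℝ := (B X S / B R S) • R + (B X R / B R S) • S with hwdef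
  set Z : Fin 3 → ℝ := X - w with hZdef
  have hwR : B w R = B X R := by
    rw [hwdef, Fcombo_left hBlin, hBR, hBsymm S R]
    field_simp
    ring
  have hwS : B w S = B X S := by
    rw [hwdef, Fcombo_left hBlin, hBS]
    field_simp
    ring
  have hZX : Z = (-1 : ℝ) • w + X := by rw [hZdef]; module
  have hZR : B Z R = 0 := by rw [hZX, hBlin, hwR]; ring
  have hZS : B Z S = 0 := by rw [hZX, hBlin, hwS]; ring
  have hXdec : X = (1:ℝ) • w + Z := by rw [hZdef]; module
  rw [hXdec, chain_lin hBlin]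
  have hcw : chainB B (2*n) P w = ((B R S / mink R S) ^ (2*n) * c) • w := by
    rw [hwdef, chain_lin hBlin, chain_smul hBlin, hchainBR, hchainBS]
    module
  have hcZ : chainB B (2*n) P Z = ((B R S / mink R S) ^ (2*n) * c) • Z := by
    rw [chain_orth hBlin hBsymm (2*n) P (fun j => ⟨a j, g j, (hag j).symm⟩) Z hZR hZS, hprodB]
  rw [hcw, hcZ]
  module
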